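/- Let d ≥ 1 be an integer, p > 1 a real number, j ∈ {1, …, d}, and let U, S, Q : ℝ^d → ℝ be radially symmetric with U continuous, U positive, and S, Q twice continuously differentiable with radial profiles s and q (S(x) = s(|x|), Q(x) = q(|x|)). Suppose that for all x ≠ 0: −ΔS(x) + S(x) − p U(x)^{p−1} S(x) − (4/|x|) s'(|x|) = U(x) and −ΔQ(x) + Q(x) − p U(x)^{p−1} Q(x) = 2 S(x). Then the function h(x) := x_j² S(x) + Q(x) satisfies −Δh(x) + h(x) − p U(x)^{p−1} h(x) = x_j² U(x) for all x ≠ 0. -/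

import Mathlib

open MeasureTheory Real Filter Topology Asymptotics

/-- Partial derivative of `f` in the `j`-th coordinate direction. -/
noncomputable def pd {d : ℕ} {E : Type*} [NormedAddCommGroup E] [NormedSpace ℝ E]
    (f : EuclideanSpace ℝ (Fin d) → E) (j : Fin d) (x : EuclideanSpace ℝ (Fin d)) : E :=
  fderiv ℝ f x (EuclideanSpace.single j 1)

/-- Euclidean Laplacian: sum of second partial derivatives. -/
noncomputable def lap {d : ℕ} {E : Type*} [NormedAddCommGroup E] [NormedSpace ℝ E]
    (f : EuclideanSpace ℝ (Fin d) → E) (x : EuclideanSpace ℝ (Fin d)) : E :=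
  ∑ j, pd (pd f j) j x

lemma hasFDerivAt_norm_ne_zero {E : Type*} [NormedAddCommGroup E] [InnerProductSpace ℝ E]
    {x : E} (hx : x ≠ 0) :
    HasFDerivAt (fun y : E => ‖y‖) (‖x‖⁻¹ • innerSL ℝ x) x := by
  have h1 : HasFDerivAt (fun y : E => ‖y‖ ^ 2) (2 • innerSL ℝ x) x :=
    (hasStrictFDerivAt_norm_sq x).hasFDerivAt
  have hx2 : (‖x‖ ^ 2 : ℝ) ≠ 0 := pow_ne_zero 2 (norm_ne_zero_iff.mpr hx)
  have h2 : HasFDerivAt ((fun x => √x) ∘ fun y : E => ‖y‖ ^ 2)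
      ((1 / (2 * √(‖x‖ ^ 2))) • (2 • innerSL ℝ x)) x :=
    (Real.hasDerivAt_sqrt hx2).comp_hasFDerivAt x h1
  convert h2 using 1
  · funext y
    simp [Real.sqrt_sq (norm_nonneg y)]
  · ext y
    have hxn : (0:ℝ) < ‖x‖ := norm_pos_iff.mpr hx
    simp only [ContinuousLinearMap.smul_apply, ContinuousLinearMap.coe_smul', Pi.smul_apply,
      smul_eq_mul]
    rw [Real.sqrt_sq (norm_nonneg x)]
    field_simp
    ring

lemma radial_fderiv {E : Type*} [NormedAddCommGroup E] [InnerProductSpace ℝ E]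
    {S : E → ℝ} {s : ℝ → ℝ} (hS : Differentiable ℝ S)
    (hSrad : ∀ x, S x = s ‖x‖) {x : E} (hx : x ≠ 0) :
    HasFDerivAt S ((deriv s ‖x‖ * ‖x‖⁻¹) • innerSL ℝ x) x := by
  have hr : (0:ℝ) < ‖x‖ := norm_pos_iff.mpr hx
  set e : E := (‖x‖:ℝ)⁻¹ • x with he
  have hee : ‖e‖ = 1 := by
    rw [he, norm_smul, norm_inv, norm_norm, inv_mul_cancel₀ hr.ne']
  have hre : ‖x‖ • e = x := by rw [he, smul_smul, mul_inv_cancel₀ hr.ne', one_smul]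
  have hc : HasDerivAt (fun t : ℝ => S (t • e)) (fderiv ℝ S x e) ‖x‖ := by
    have h1 : HasDerivAt (fun t : ℝ => t • e) e ‖x‖ := by
      simpa using (hasDerivAt_id (‖x‖:ℝ)).smul_const e
    have hSx : HasFDerivAt S (fderiv ℝ S x) (‖x‖ • e) := by
      rw [hre]; exact (hS x).hasFDerivAt
    exact hSx.comp_hasDerivAt ‖x‖ h1
  have hev : (fun t : ℝ => S (t • e)) =ᶠ[𝓝 ‖x‖] s := by
    filter_upwards [eventually_gt_nhds hr] with t ht
    rw [hSrad, norm_smul, hee, Real.norm_eq_abs, abs_of_pos ht, mul_one]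
  have hds : HasDerivAt s (fderiv ℝ S x e) ‖x‖ := hc.congr_of_eventuallyEq hev.symm
  have hderiv : deriv s ‖x‖ = fderiv ℝ S x e := hds.deriv
  have hnorm := hasFDerivAt_norm_ne_zero hx
  have hcomp : HasFDerivAt (fun y : E => s ‖y‖) ((fderiv ℝ S x e) • ‖x‖⁻¹ • innerSL ℝ x) x :=
    hds.comp_hasFDerivAt x hnorm
  have hfun : S = (fun y => s ‖y‖) := funext hSrad
  rw [hfun]
  convert hcomp using 1
  ext y
  simp [hderiv, smul_smul]

lemma pd_eq_of_hasFDerivAt {d : ℕ} {f : EuclideanSpace ℝ (Fin d) → ℝ}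
    {L : EuclideanSpace ℝ (Fin d) →L[ℝ] ℝ} {x : EuclideanSpace ℝ (Fin d)}
    (h : HasFDerivAt f L x) (i : Fin d) :
    pd f i x = L (EuclideanSpace.single i 1) := by
  unfold pd; rw [h.fderiv]

lemma pd_contDiff {d : ℕ} {S : EuclideanSpace ℝ (Fin d) → ℝ} (hS : ContDiff ℝ 2 S) (i : Fin d) :
    ContDiff ℝ 1 (pd S i) := by
  have := (hS.fderiv_right (m := 1) (by norm_num)).clm_apply
    (contDiff_const (c := EuclideanSpace.single i 1))
  exact this

lemma hasFDerivAt_coord_sq {d : ℕ} (j : Fin d) (z : EuclideanSpace ℝ (Fin d)) :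
    HasFDerivAt (fun y : EuclideanSpace ℝ (Fin d) => (y j)^2)
      ((2 * z j) • (EuclideanSpace.proj j : EuclideanSpace ℝ (Fin d) →L[ℝ] ℝ)) z := by
  have h : HasFDerivAt (fun y : EuclideanSpace ℝ (Fin d) => (y j) ^ 2)
      ((((2:ℕ):ℝ) * (z j) ^ (2 - 1)) • (EuclideanSpace.proj j : EuclideanSpace ℝ (Fin d) →L[ℝ] ℝ)) z := by
    have h0 := (hasDerivAt_pow 2 (z j)).comp_hasFDerivAt z
      (EuclideanSpace.proj j : EuclideanSpace ℝ (Fin d) →L[ℝ] ℝ).hasFDerivAt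
    exact h0
  simpa using h

lemma lap_formula {d : ℕ} (j : Fin d) (S Q : EuclideanSpace ℝ (Fin d) → ℝ)
    (hS : ContDiff ℝ 2 S) (hQ : ContDiff ℝ 2 Q) (x : EuclideanSpace ℝ (Fin d)) :
    lap (fun y => (y j)^2 * S y + Q y) x
      = 2 * S x + 4 * x j * pd S j x + (x j)^2 * lap S x + lap Q x := by
  have hSd : Differentiable ℝ S := hS.differentiable (by norm_num)
  have hQd : Differentiable ℝ Q := hQ.differentiable (by norm_num)
  have hpdSd : ∀ i, Differentiable ℝ (pd S i) := fun i => (pd_contDiff hS i).differentiable (by norm_num)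
  have hpdQd : ∀ i, Differentiable ℝ (pd Q i) := fun i => (pd_contDiff hQ i).differentiable (by norm_num)
  have hcoord : ∀ z : EuclideanSpace ℝ (Fin d), HasFDerivAt (fun y : EuclideanSpace ℝ (Fin d) => y j)
      (EuclideanSpace.proj j : EuclideanSpace ℝ (Fin d) →L[ℝ] ℝ) z := fun z =>
    (EuclideanSpace.proj j : EuclideanSpace ℝ (Fin d) →L[ℝ] ℝ).hasFDerivAt
  have hpd1 : ∀ (i : Fin d) z, pd (fun y => (y j)^2 * S y + Q y) i z
      = 2 * (EuclideanSpace.single i 1 j) * (z j * S z) + (z j)^2 * pd S i z + pd Q i z := by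
    intro i z
    have h := ((hasFDerivAt_coord_sq j z).mul (hSd z).hasFDerivAt).add (hQd z).hasFDerivAt
    rw [pd_eq_of_hasFDerivAt (f := fun y => (y j)^2 * S y + Q y) h]
    simp only [ContinuousLinearMap.add_apply, ContinuousLinearMap.smul_apply, smul_eq_mul,
      ContinuousLinearMap.coe_smul', Pi.smul_apply, PiLp.proj_apply, pd]
    ring
  have hpd2 : ∀ i : Fin d, pd (pd (fun y => (y j)^2 * S y + Q y) i) i x
      = (EuclideanSpace.single i 1 j) * (2 * (x j * pd S i x) + 2 * (EuclideanSpace.single i 1 j) * S x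
          + pd S i x * (2 * x j))
        + (x j)^2 * pd (pd S i) i x + pd (pd Q i) i x := by
    intro i
    set δ : ℝ := EuclideanSpace.single i 1 j with hδ
    have hfun : pd (fun y => (y j)^2 * S y + Q y) i
        = fun z => 2 * δ * (z j * S z) + (z j)^2 * pd S i z + pd Q i z := funext (hpd1 i)
    rw [hfun]
    have h1 : HasFDerivAt (fun z : EuclideanSpace ℝ (Fin d) => z j * S z)
        ((x j) • fderiv ℝ S x + S x • (EuclideanSpace.proj j : EuclideanSpace ℝ (Fin d) →L[ℝ] ℝ)) x :=
      (hcoord x).mul (hSd x).hasFDerivAt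
    have h2 : HasFDerivAt (fun z : EuclideanSpace ℝ (Fin d) => (z j)^2 * pd S i z)
        (((x j)^2) • fderiv ℝ (pd S i) x + pd S i x • ((2 * x j) • (EuclideanSpace.proj j : EuclideanSpace ℝ (Fin d) →L[ℝ] ℝ))) x :=
      (hasFDerivAt_coord_sq j x).mul ((hpdSd i) x).hasFDerivAt
    have h3 : HasFDerivAt (pd Q i) (fderiv ℝ (pd Q i) x) x := ((hpdQd i) x).hasFDerivAt
    have h := ((h1.const_mul (2 * δ)).add h2).add h3
    rw [pd_eq_of_hasFDerivAt (f := fun z => 2 * δ * (z j * S z) + (z j)^2 * pd S i z + pd Q i z) h]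
    simp only [ContinuousLinearMap.add_apply, ContinuousLinearMap.smul_apply, smul_eq_mul,
      ContinuousLinearMap.coe_smul', Pi.smul_apply, PiLp.proj_apply, pd]
    simp only [← hδ]
    ring
  unfold lap
  rw [Finset.sum_congr rfl (fun i _ => hpd2 i)]
  rw [Finset.sum_add_distrib, Finset.sum_add_distrib, ← Finset.mul_sum]
  have hB : ∑ i : Fin d, (EuclideanSpace.single i 1 j : ℝ) * (2 * (x j * pd S i x)
      + 2 * (EuclideanSpace.single i 1 j) * S x + pd S i x * (2 * x j))
      = 2 * S x + 4 * x j * pd S j x := by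
    rw [Finset.sum_eq_single_of_mem j (Finset.mem_univ j)]
    · simp [EuclideanSpace.single_apply]
      ring
    · intro i _ hij
      have : (EuclideanSpace.single i 1 j : ℝ) = 0 := by
        simp [EuclideanSpace.single_apply, (hij.symm : j ≠ i)]
      rw [this]; ring
  rw [hB]

/-- decomposition `L₊⁻¹(x_j² U) = x_j² S + Q` of the lattice-induced
correction into an anisotropic part `S` and an isotropic part `Q`. -/
theorem anisotropic_isotropic_decomposition (d : ℕ) (hd : 1 ≤ d) (p : ℝ) (hp : 1 < p)
    (j : Fin d)
    (U S Q : EuclideanSpace ℝ (Fin d) → ℝ)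
    (hUcont : Continuous U) (hUpos : ∀ x, 0 < U x)
    (hS : ContDiff ℝ 2 S) (hQ : ContDiff ℝ 2 Q)
    (s q : ℝ → ℝ)
    (hSrad : ∀ x, S x = s ‖x‖) (hQrad : ∀ x, Q x = q ‖x‖)
    (hUrad : ∃ φ : ℝ → ℝ, ∀ x, U x = φ ‖x‖)
    (hSeq : ∀ x : EuclideanSpace ℝ (Fin d), x ≠ 0 →
      -(lap S x) + S x - p * U x ^ (p - 1) * S x - (4 / ‖x‖) * deriv s ‖x‖ = U x)
    (hQeq : ∀ x : EuclideanSpace ℝ (Fin d), x ≠ 0 →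
      -(lap Q x) + Q x - p * U x ^ (p - 1) * Q x = 2 * S x) :
    ∀ x : EuclideanSpace ℝ (Fin d), x ≠ 0 →
      -(lap (fun y => (y j) ^ 2 * S y + Q y) x)
        + ((x j) ^ 2 * S x + Q x)
        - p * U x ^ (p - 1) * ((x j) ^ 2 * S x + Q x)
      = (x j) ^ 2 * U x := by
  intro x hx
  have hSd : Differentiable ℝ S := hS.differentiable (by norm_num)
  have hrn : ‖x‖ ≠ 0 := norm_ne_zero_iff.mpr hx
  have hpdSj : pd S j x = deriv s ‖x‖ * ‖x‖⁻¹ * x j := by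
    rw [pd_eq_of_hasFDerivAt (radial_fderiv hSd hSrad hx) j]
    simp [EuclideanSpace.inner_single_right, real_inner_comm]
  have hlap := lap_formula j S Q hS hQ x
  have h1 := hSeq x hx
  have h2 := hQeq x hx
  linear_combination (-1 : ℝ) * hlap + (x j)^2 * h1 + h2 - 4 * (x j) * hpdSj
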